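/- arXiv:1403.1401 — 3 statements merged into one kernel-verified Lean document; each statement's English description precedes it below -/
import Mathlib

section
/- Let μ > 0 and f ∈ H^1(ℝ) ∩ L^∞(ℝ). Then the function g(x) = |f(x)|^{2μ} f(x) belongs to H^1(ℝ), and ‖g‖_{H^1} ≤ c ‖f‖_{H^1}^{2μ+1} for a constant c depending only on μ. -/
open MeasureTheory

noncomputable def L2norm (f : ℝ → ℂ) : ℝ := (eLpNorm f 2 volume).toReal

noncomputable def H1norm (f g : ℝ → ℂ) : ℝ := Real.sqrt (L2norm f ^ 2 + L2norm g ^ 2)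

/-- `f` is (the continuous representative of) an `H¹(ℝ)` function with weak
derivative `g`: both are in `L²` and `f` is the integral of `g`. -/
def IsH1 (f g : ℝ → ℂ) : Prop :=
  MemLp f 2 volume ∧ MemLp g 2 volume ∧ ∀ x y : ℝ, f y - f x = ∫ t in x..y, g t

/-- The free Schrödinger kernel `U(t,x) = (4πit)^{-1/2} e^{ix²/(4t)}`. -/
noncomputable def freeK (t x : ℝ) : ℂ :=
  (4 * Real.pi * Complex.I * t) ^ (-(1/2 : ℂ)) * Complex.exp (Complex.I * x ^ 2 / (4 * t))

set_option maxHeartbeats 1000000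

noncomputable def Dpow (μ : ℝ) (z : ℂ) : ℂ →L[ℝ] ℂ :=
  (‖z‖ ^ (2*μ)) • ContinuousLinearMap.id ℝ ℂ +
    ((2*μ * ‖z‖ ^ (2*μ-2)) • (innerSL ℝ z)).smulRight z

lemma Dpow_zero (μ : ℝ) (hμ : 0 < μ) : Dpow μ 0 = 0 := by
  ext w
  simp [Dpow, Real.zero_rpow (by positivity : 2*μ ≠ 0)]

lemma hasFDerivAt_pow_mul (μ : ℝ) (hμ : 0 < μ) (z : ℂ) :
    HasFDerivAt (fun w : ℂ => (Complex.ofReal (‖w‖ ^ (2*μ))) * w) (Dpow μ z) z := by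
  have hfun : (fun w : ℂ => (Complex.ofReal (‖w‖ ^ (2*μ))) * w)
      = fun w : ℂ => ((‖w‖^2 : ℝ) ^ μ) • w := by
    funext w
    rw [Complex.real_smul, ← Real.rpow_natCast ‖w‖ 2, ← Real.rpow_mul (norm_nonneg w)]
    norm_num
  rcases eq_or_ne z 0 with rfl | hz
  · rw [Dpow_zero μ hμ]
    rw [hasFDerivAt_iff_isLittleO_nhds_zero]
    refine Asymptotics.isLittleO_iff.2 fun c hc => ?_
    have ht : Filter.Tendsto (fun h : ℂ => ‖h‖ ^ (2*μ)) (nhds 0) (nhds 0) := by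
      have h1 : Filter.Tendsto (fun h : ℂ => ‖h‖) (nhds 0) (nhds 0) := by
        simpa using continuous_norm.tendsto (0:ℂ)
      have h2 : ContinuousAt (fun x : ℝ => x ^ (2*μ)) 0 :=
        Real.continuousAt_rpow_const 0 (2*μ) (Or.inr (by positivity))
      have := h2.tendsto.comp h1
      simpa [Function.comp_def, Real.zero_rpow (by positivity : 2*μ ≠ 0)] using this
    filter_upwards [ht.eventually (gt_mem_nhds hc)] with h hh
    have : ‖(Complex.ofReal (‖h‖ ^ (2*μ))) * h‖ = ‖h‖ ^ (2*μ) * ‖h‖ := by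
      rw [norm_mul, Complex.norm_real, Real.norm_eq_abs,
        abs_of_nonneg (Real.rpow_nonneg (norm_nonneg h) _)]
    simp only [zero_add, norm_zero, Real.zero_rpow (by positivity : 2*μ ≠ 0),
      Complex.ofReal_zero, zero_mul, sub_zero, ContinuousLinearMap.zero_apply, this]
    exact mul_le_mul_of_nonneg_right hh.le (norm_nonneg h)
  · have hn : (0:ℝ) < ‖z‖ := norm_pos_iff.2 hz
    have h1 : HasFDerivAt (fun w : ℂ => (‖w‖^2 : ℝ)) (2 • innerSL ℝ z) z :=
      (hasStrictFDerivAt_norm_sq z).hasFDerivAt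
    have h2 : HasDerivAt (fun s : ℝ => s ^ μ) (μ * (‖z‖^2 : ℝ) ^ (μ-1)) (‖z‖^2) :=
      Real.hasDerivAt_rpow_const (Or.inl (by positivity))
    have h3 := h2.comp_hasFDerivAt z h1
    have h4 := h3.smul (hasFDerivAt_id z)
    rw [hfun]
    have e1 : ((‖z‖^2 : ℝ)) ^ μ = ‖z‖ ^ (2*μ) := by
      rw [← Real.rpow_natCast ‖z‖ 2, ← Real.rpow_mul (norm_nonneg z)]; norm_num
    have e2 : ((‖z‖^2 : ℝ)) ^ (μ-1) = ‖z‖ ^ (2*μ-2) := by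
      rw [← Real.rpow_natCast ‖z‖ 2, ← Real.rpow_mul (norm_nonneg z)]
      norm_num; ring_nf
    have e3 : (2*μ * ‖z‖ ^ (2*μ-2)) • (innerSL ℝ z)
        = (μ * (‖z‖^2 : ℝ) ^ (μ-1)) • 2 • (innerSL ℝ z) := by
      rw [← Nat.cast_smul_eq_nsmul ℝ 2 (innerSL ℝ z), smul_smul]
      rw [e2]
      norm_num
      ring
    have h5 : Dpow μ z = ((‖z‖^2 : ℝ) ^ μ) • ContinuousLinearMap.id ℝ ℂ +
        ((μ * (‖z‖^2 : ℝ) ^ (μ-1)) • 2 • (innerSL ℝ z)).smulRight z := by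
      unfold Dpow
      rw [e1, e3]
    rw [h5]
    exact h4

lemma rpow_aux (μ : ℝ) (hμ : 0 < μ) (t : ℝ) (ht : 0 ≤ t) : t ^ (2*μ-2) * t^2 = t^(2*μ) := by
  rcases eq_or_lt_of_le ht with h | h
  · rw [← h]
    rcases eq_or_ne μ 1 with rfl | hμ1
    · norm_num
    · rw [Real.zero_rpow (by intro hc; apply hμ1; linarith [hc] : 2*μ-2 ≠ 0),
        Real.zero_rpow (by positivity : 2*μ ≠ 0)]
      ring
  · rw [← Real.rpow_natCast t 2, ← Real.rpow_add h]
    norm_num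

lemma normB_le (μ : ℝ) (hμ : 0 < μ) (z : ℂ) :
    ‖((2*μ * ‖z‖ ^ (2*μ-2)) • (innerSL ℝ z)).smulRight z‖ ≤ 2*μ * ‖z‖^(2*μ) := by
  rw [ContinuousLinearMap.norm_smulRight_apply, norm_smul, innerSL_apply_norm,
    Real.norm_eq_abs, abs_of_nonneg (by positivity)]
  have h := rpow_aux μ hμ ‖z‖ (norm_nonneg z)
  have : 2*μ * ‖z‖ ^ (2*μ-2) * ‖z‖ * ‖z‖ = 2*μ * ‖z‖^(2*μ) := by rw [← h]; ring
  exact this.le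

lemma norm_Dpow_le (μ : ℝ) (hμ : 0 < μ) (z : ℂ) :
    ‖Dpow μ z‖ ≤ (2*μ+1) * ‖z‖^(2*μ) := by
  unfold Dpow
  have h1 : ‖(‖z‖ ^ (2*μ)) • ContinuousLinearMap.id ℝ ℂ‖ ≤ ‖z‖ ^ (2*μ) := by
    refine (norm_smul_le (‖z‖ ^ (2*μ)) (ContinuousLinearMap.id ℝ ℂ)).trans ?_
    rw [Real.norm_eq_abs, abs_of_nonneg (by positivity)]
    exact mul_le_of_le_one_right (by positivity) ContinuousLinearMap.norm_id_le
  calc ‖_ + _‖ ≤ ‖(‖z‖ ^ (2*μ)) • ContinuousLinearMap.id ℝ ℂ‖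
      + ‖((2*μ * ‖z‖ ^ (2*μ-2)) • (innerSL ℝ z)).smulRight z‖ := norm_add_le _ _
  _ ≤ ‖z‖ ^ (2*μ) + 2*μ * ‖z‖^(2*μ) := add_le_add h1 (normB_le μ hμ z)
  _ = (2*μ+1) * ‖z‖^(2*μ) := by ring

lemma continuous_rpow_norm (p : ℝ) (hp : 0 < p) :
    Continuous fun z : ℂ => ‖z‖ ^ p := by
  rw [continuous_iff_continuousAt]
  intro z
  have := (Real.continuousAt_rpow_const ‖z‖ p (Or.inr hp.le)).comp
    continuous_norm.continuousAt
  simpa [Function.comp_def] using this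

lemma continuous_Dpow (μ : ℝ) (hμ : 0 < μ) : Continuous (Dpow μ) := by
  unfold Dpow
  refine Continuous.add ((continuous_rpow_norm _ (by positivity)).smul
    (continuous_const : Continuous fun _ : ℂ => ContinuousLinearMap.id ℝ ℂ)) ?_
  rw [continuous_iff_continuousAt]
  intro z
  rcases eq_or_ne z 0 with rfl | hz
  · have hB0 : (((2*μ * ‖(0:ℂ)‖ ^ (2*μ-2)) • (innerSL ℝ (0:ℂ))).smulRight (0:ℂ))
        = 0 := by ext w; simp
    rw [ContinuousAt, hB0]
    have htend : Filter.Tendsto (fun w : ℂ => 2*μ * ‖w‖^(2*μ)) (nhds 0) (nhds 0) := by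
      have := (continuous_const.mul (continuous_rpow_norm (2*μ)
        (by positivity)) : Continuous fun w : ℂ => 2*μ * ‖w‖^(2*μ)).tendsto (0:ℂ)
      simpa [Pi.mul_def, Real.zero_rpow (by positivity : 2*μ ≠ 0)] using this
    exact squeeze_zero_norm (fun w => normB_le μ hμ w) htend
  · have hnorm : ContinuousAt (fun z : ℂ => 2*μ * ‖z‖ ^ (2*μ-2)) z := by
      refine ContinuousAt.mul continuousAt_const ?_
      have := (Real.continuousAt_rpow_const ‖z‖ (2*μ-2)
        (Or.inl (norm_ne_zero_iff.2 hz))).comp (continuous_norm.continuousAt (x := z))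
      simpa [Function.comp_def] using this
    have hL : ContinuousAt (fun z : ℂ => (2*μ * ‖z‖ ^ (2*μ-2)) • (innerSL ℝ z)) z :=
      hnorm.smul ((innerSL ℝ).continuous.continuousAt)
    have hSR : ContinuousAt (fun z : ℂ =>
        (ContinuousLinearMap.smulRightL ℝ ℂ ℂ) ((2*μ * ‖z‖ ^ (2*μ-2)) • (innerSL ℝ z))) z :=
      ContinuousAt.comp (ContinuousLinearMap.continuous _).continuousAt hL
    have happ : ContinuousAt (fun p : (ℂ →L[ℝ] ℂ →L[ℝ] ℂ) × ℂ => p.1 p.2)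
        ((fun z : ℂ => ((ContinuousLinearMap.smulRightL ℝ ℂ ℂ)
          ((2*μ * ‖z‖ ^ (2*μ-2)) • (innerSL ℝ z)), z)) z) :=
      isBoundedBilinearMap_apply.continuous.continuousAt
    have hfinal : ContinuousAt ((fun p : (ℂ →L[ℝ] ℂ →L[ℝ] ℂ) × ℂ => p.1 p.2) ∘
        (fun z : ℂ => ((ContinuousLinearMap.smulRightL ℝ ℂ ℂ)
          ((2*μ * ‖z‖ ^ (2*μ-2)) • (innerSL ℝ z)), z))) z :=
      ContinuousAt.comp happ (hSR.prodMk continuousAt_id)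
    exact hfinal

noncomputable def Npow (μ : ℝ) (z : ℂ) : ℂ := (Complex.ofReal (‖z‖ ^ (2*μ))) * z

lemma continuous_Npow (μ : ℝ) (hμ : 0 < μ) : Continuous (Npow μ) :=
  continuous_iff_continuousAt.2 fun z => (hasFDerivAt_pow_mul μ hμ z).continuousAt

lemma memL2_integrableOn {u : ℝ → ℂ} (h : MemLp u 2 volume) {s : Set ℝ}
    (hs : volume s < ⊤) : IntegrableOn u s volume := by
  have : IsFiniteMeasure (volume.restrict s) := ⟨by rwa [Measure.restrict_apply_univ]⟩
  exact memLp_one_iff_integrable.mp ((h.restrict s).mono_exponent one_le_two)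

lemma memL2_intervalIntegrable {u : ℝ → ℂ} (h : MemLp u 2 volume) (a b : ℝ) :
    IntervalIntegrable u volume a b := by
  rw [intervalIntegrable_iff]
  exact memL2_integrableOn h measure_Ioc_lt_top

lemma IsH1.continuous {f f' : ℝ → ℂ} (h : IsH1 f f') : Continuous f := by
  obtain ⟨hf2, hf'2, hftc⟩ := h
  have : f = fun t => f 0 + ∫ s in (0:ℝ)..t, f' s := by
    funext t
    rw [← hftc 0 t]
    ring
  rw [this]
  exact continuous_const.add
    (intervalIntegral.continuous_primitive (memL2_intervalIntegrable hf'2) 0)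

lemma key_ftc (μ : ℝ) (hμ : 0 < μ) (f f' : ℝ → ℂ) (h : IsH1 f f')
    (M : ℝ) (hM : ∀ t, ‖f t‖ ≤ M) (x y : ℝ) :
    Npow μ (f y) - Npow μ (f x) = ∫ t in x..y, Dpow μ (f t) (f' t) := by
  obtain ⟨hf2, hf'2, hftc⟩ := h
  have hfc : Continuous f := IsH1.continuous ⟨hf2, hf'2, hftc⟩
  set I : Set ℝ := Set.uIcc x y with hI
  have hIvol : volume I < ⊤ := measure_Icc_lt_top
  have hf'I : IntegrableOn f' I volume := memL2_integrableOn hf'2 hIvol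
  -- approximating sequence
  have hex : ∀ n : ℕ, ∃ g : ℝ → ℂ, Continuous g ∧
      eLpNorm (f' - g) 2 volume ≤ ENNReal.ofReal (1/(n+1)) ∧ MemLp g 2 volume := by
    intro n
    obtain ⟨g, _, hg1, hg2, hg3⟩ := hf'2.exists_hasCompactSupport_eLpNorm_sub_le
      (by norm_num : (2:ENNReal) ≠ ⊤)
      (by positivity : (ENNReal.ofReal (1/(n+1))) ≠ 0)
    exact ⟨g, hg2, hg1, hg3⟩
  choose g hgc hgnorm hg2 using hex
  -- continue
  set F : ℕ → ℝ → ℂ := fun n t => f x + ∫ s in x..t, g n s with hF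
  have hFc : ∀ n, Continuous (F n) := fun n =>
    continuous_const.add (intervalIntegral.continuous_primitive
      (fun a b => (hgc n).intervalIntegrable a b) x)
  have hFx : ∀ n, F n x = f x := by intro n; simp [hF]
  have hFderiv : ∀ n t, HasDerivAt (F n) (g n t) t := by
    intro n t
    have := intervalIntegral.integral_hasDerivAt_right
      ((hgc n).intervalIntegrable x t)
      ((hgc n).stronglyMeasurableAtFilter volume (nhds t))
      (hgc n).continuousAt
    exact this.const_add (f x)
  have hgf'int : ∀ n, IntegrableOn (fun t => g n t - f' t) I volume := fun n =>
    (((hgc n).continuousOn).integrableOn_compact isCompact_uIcc).sub hf'I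
  set Iseq : ℕ → ℝ := fun n => ∫ t in I, ‖g n t - f' t‖ ∂volume with hIseq
  set C : ENNReal := (volume I) ^ ((1:ℝ)/1 - 1/2) with hC
  have hCfin : C ≠ ⊤ := by
    rw [hC]
    exact (ENNReal.rpow_lt_top_of_nonneg (by norm_num) hIvol.ne).ne
  set J : ℕ → ENNReal := fun n => ∫⁻ t in I, ‖g n t - f' t‖₊ ∂volume with hJdef
  have hJ : ∀ n, J n ≤ ENNReal.ofReal (1/(n+1)) * C := by
    intro n
    have h1 : J n = eLpNorm (fun t => g n t - f' t) 1 (volume.restrict I) := by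
      rw [eLpNorm_one_eq_lintegral_enorm]; rfl
    rw [h1]
    have h2 := eLpNorm_le_eLpNorm_mul_rpow_measure_univ (p := 1) (q := 2)
      (f := fun t => g n t - f' t) (μ := volume.restrict I) one_le_two
      (((hgc n).aestronglyMeasurable).sub hf'2.1).restrict
    refine h2.trans (mul_le_mul' ?_ ?_)
    · calc eLpNorm (fun t => g n t - f' t) 2 (volume.restrict I)
          ≤ eLpNorm (fun t => g n t - f' t) 2 volume :=
            eLpNorm_mono_measure _ Measure.restrict_le_self
      _ = eLpNorm (f' - g n) 2 volume := by
          rw [← eLpNorm_neg]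
          congr 1
          funext t
          simp
      _ ≤ ENNReal.ofReal (1/(n+1)) := hgnorm n
    · rw [Measure.restrict_apply_univ, hC]
      norm_num
  have hJtend : Filter.Tendsto J Filter.atTop (nhds 0) := by
    have hb : Filter.Tendsto (fun n : ℕ => ENNReal.ofReal (1/(n+1)) * C)
        Filter.atTop (nhds 0) := by
      have h0 : Filter.Tendsto (fun n : ℕ => ENNReal.ofReal (1/(n+1)))
          Filter.atTop (nhds 0) := by
        have := ENNReal.tendsto_ofReal
          (tendsto_one_div_add_atTop_nhds_zero_nat)
        simpa using this
      have := ENNReal.Tendsto.mul_const h0 (Or.inr hCfin)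
      simpa using this
    exact tendsto_of_tendsto_of_tendsto_of_le_of_le tendsto_const_nhds hb
      (fun n => zero_le) hJ
  have hIseq_eq : ∀ n, Iseq n = (J n).toReal := by
    intro n
    show (∫ t in I, ‖g n t - f' t‖ ∂volume) = (∫⁻ t in I, ‖g n t - f' t‖ₑ ∂volume).toReal
    rw [← ofReal_integral_norm_eq_lintegral_enorm (hgf'int n),
      ENNReal.toReal_ofReal (integral_nonneg (fun t => norm_nonneg _))]
  have hIseq_tend : Filter.Tendsto Iseq Filter.atTop (nhds 0) := by
    have := (ENNReal.tendsto_toReal ENNReal.zero_ne_top).comp hJtend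
    simp only [Function.comp_def] at this
    have heq : (fun n => (J n).toReal) = Iseq := by
      funext n; rw [hIseq_eq n]
    rw [← heq]
    simpa using this
  set C0 : ℝ := C.toReal with hC0
  have hC0_nonneg : 0 ≤ C0 := ENNReal.toReal_nonneg
  have hIseq_le : ∀ n, Iseq n ≤ C0 := by
    intro n
    rw [hIseq_eq n, hC0]
    refine ENNReal.toReal_mono hCfin ((hJ n).trans ?_)
    calc ENNReal.ofReal (1/(n+1)) * C ≤ 1 * C := by
          gcongr
          rw [show (1:ENNReal) = ENNReal.ofReal 1 by simp]
          exact ENNReal.ofReal_le_ofReal (by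
            rw [div_le_one (by positivity)]
            linarith [Nat.cast_nonneg (α := ℝ) n])
    _ = C := one_mul C
  -- part B
  have hM0 : 0 ≤ M := le_trans (norm_nonneg _) (hM x)
  have hsub : Set.uIoc x y ⊆ I := Set.Ioc_subset_Icc_self
  have hFsub : ∀ n, ∀ t ∈ I, ‖F n t - f t‖ ≤ Iseq n := by
    intro n t ht
    have heq : F n t - f t = ∫ s in x..t, (g n s - f' s) := by
      rw [intervalIntegral.integral_sub ((hgc n).intervalIntegrable x t)
        (memL2_intervalIntegrable hf'2 x t)]
      have h2 := hftc x t
      show f x + (∫ s in x..t, g n s) - f t = _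
      rw [show f t = f x + ∫ s in x..t, f' s by rw [← h2]; ring]
      ring
    rw [heq]
    calc ‖∫ s in x..t, (g n s - f' s)‖ ≤ ∫ s in Set.uIoc x t, ‖g n s - f' s‖ ∂volume :=
        intervalIntegral.norm_integral_le_integral_norm_uIoc
    _ ≤ Iseq n := by
        refine setIntegral_mono_set (hgf'int n).norm
          (Filter.Eventually.of_forall fun s => norm_nonneg _) ?_
        refine Filter.Eventually.of_forall ?_
        exact fun s hs => (Set.Ioc_subset_Icc_self.trans
          (Set.uIcc_subset_uIcc Set.left_mem_uIcc ht)) hs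
  have hFbound : ∀ n, ∀ t ∈ I, ‖F n t‖ ≤ M + C0 := by
    intro n t ht
    calc ‖F n t‖ = ‖f t + (F n t - f t)‖ := by ring_nf
    _ ≤ ‖f t‖ + ‖F n t - f t‖ := norm_add_le _ _
    _ ≤ M + C0 := add_le_add (hM t) ((hFsub n t ht).trans (hIseq_le n))
  set K : ℝ := (2*μ+1) * (M + C0) ^ (2*μ) with hK
  have hK0 : 0 ≤ K := by positivity
  have hDF : ∀ n, ∀ t ∈ I, ‖Dpow μ (F n t)‖ ≤ K := by
    intro n t ht
    refine (norm_Dpow_le μ hμ _).trans ?_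
    rw [hK]
    refine mul_le_mul_of_nonneg_left ?_ (by linarith)
    exact Real.rpow_le_rpow (norm_nonneg _) (hFbound n t ht) (by positivity)
  have heqn : ∀ n, Npow μ (F n y) - Npow μ (F n x)
      = ∫ t in x..y, Dpow μ (F n t) (g n t) := by
    intro n
    refine (intervalIntegral.integral_eq_sub_of_hasDerivAt
      (f := fun u => Npow μ (F n u)) (f' := fun t => Dpow μ (F n t) (g n t))
      (fun t ht => ?_) ?_).symm
    · exact (hasFDerivAt_pow_mul μ hμ (F n t)).comp_hasDerivAt t (hFderiv n t)
    · exact (((continuous_Dpow μ hμ).comp (hFc n)).clm_apply (hgc n)).intervalIntegrable x y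
  have hDf'int : ∀ n, IntervalIntegrable (fun t => Dpow μ (F n t) (f' t)) volume x y := by
    intro n
    rw [intervalIntegrable_iff]
    refine Integrable.mono' (MeasureTheory.IntegrableOn.mono_set (t := I) (hf'I.norm.const_mul K) hsub) ?_ ?_
    · exact (ContinuousLinearMap.id ℝ (ℂ →L[ℝ] ℂ)).aestronglyMeasurable_comp₂
        (((continuous_Dpow μ hμ).comp (hFc n)).aestronglyMeasurable) hf'2.1.restrict
    · refine (ae_restrict_iff' measurableSet_uIoc).2 (Filter.Eventually.of_forall fun t ht => ?_)
      calc ‖Dpow μ (F n t) (f' t)‖ ≤ ‖Dpow μ (F n t)‖ * ‖f' t‖ :=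
          ContinuousLinearMap.le_opNorm _ _
      _ ≤ K * ‖f' t‖ := mul_le_mul_of_nonneg_right (hDF n t (hsub ht)) (norm_nonneg _)
  have hD2eq : ∀ n, (fun t => Dpow μ (F n t) (g n t - f' t))
      = fun t => Dpow μ (F n t) (g n t) - Dpow μ (F n t) (f' t) :=
    fun n => funext fun t => map_sub _ _ _
  have hD2int : ∀ n, IntervalIntegrable (fun t => Dpow μ (F n t) (g n t - f' t)) volume x y := by
    intro n
    rw [hD2eq n]
    exact ((((continuous_Dpow μ hμ).comp (hFc n)).clm_apply (hgc n)).intervalIntegrable x y).sub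
      (hDf'int n)
  have hterm2 : ∀ n, ‖∫ t in x..y, Dpow μ (F n t) (g n t - f' t)‖ ≤ K * Iseq n := by
    intro n
    calc ‖∫ t in x..y, Dpow μ (F n t) (g n t - f' t)‖
        ≤ ∫ t in Set.uIoc x y, ‖Dpow μ (F n t) (g n t - f' t)‖ ∂volume :=
        intervalIntegral.norm_integral_le_integral_norm_uIoc
    _ ≤ ∫ t in Set.uIoc x y, K * ‖g n t - f' t‖ ∂volume := by
        refine setIntegral_mono_on ?_ ?_ measurableSet_uIoc ?_
        · have := (hD2int n)
          rw [intervalIntegrable_iff] at this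
          exact this.norm
        · exact (MeasureTheory.IntegrableOn.mono_set (t := I) ((hgf'int n).norm.const_mul K) hsub)
        · intro t ht
          calc ‖Dpow μ (F n t) (g n t - f' t)‖ ≤ ‖Dpow μ (F n t)‖ * ‖g n t - f' t‖ :=
              ContinuousLinearMap.le_opNorm _ _
          _ ≤ K * ‖g n t - f' t‖ :=
              mul_le_mul_of_nonneg_right (hDF n t (hsub ht)) (norm_nonneg _)
    _ ≤ ∫ t in I, K * ‖g n t - f' t‖ ∂volume := by
        refine setIntegral_mono_set ((hgf'int n).norm.const_mul K)
          (Filter.Eventually.of_forall fun s => by positivity)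
          (Filter.Eventually.of_forall fun s hs => hsub hs)
    _ = K * Iseq n := by rw [hIseq]; exact integral_const_mul K _
  have hsplit : ∀ n, (∫ t in x..y, Dpow μ (F n t) (g n t))
      = (∫ t in x..y, Dpow μ (F n t) (f' t))
        + ∫ t in x..y, Dpow μ (F n t) (g n t - f' t) := by
    intro n
    rw [← intervalIntegral.integral_add (hDf'int n) (hD2int n)]
    congr 1
    funext t
    rw [map_sub]
    ring
  -- limits
  have hFy_tend : Filter.Tendsto (fun n => F n y) Filter.atTop (nhds (f y)) := by
    rw [tendsto_iff_norm_sub_tendsto_zero]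
    exact squeeze_zero (fun n => norm_nonneg _)
      (fun n => hFsub n y Set.right_mem_uIcc) hIseq_tend
  have hLHS : Filter.Tendsto (fun n => Npow μ (F n y) - Npow μ (F n x)) Filter.atTop
      (nhds (Npow μ (f y) - Npow μ (f x))) := by
    have h1 : Filter.Tendsto (fun n => Npow μ (F n y)) Filter.atTop (nhds (Npow μ (f y))) := by
      have := ((continuous_Npow μ hμ).continuousAt (x := f y)).tendsto.comp hFy_tend
      simpa [Function.comp_def] using this
    have heq2 : (fun n => Npow μ (F n y) - Npow μ (F n x))
        = fun n => Npow μ (F n y) - Npow μ (f x) := by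
      funext n; rw [hFx n]
    rw [heq2]
    exact h1.sub_const _
  have hDCT : Filter.Tendsto (fun n => ∫ t in x..y, Dpow μ (F n t) (f' t)) Filter.atTop
      (nhds (∫ t in x..y, Dpow μ (f t) (f' t))) := by
    refine intervalIntegral.tendsto_integral_filter_of_dominated_convergence
      (bound := fun t => K * ‖f' t‖) ?_ ?_ ?_ ?_
    · refine Filter.Eventually.of_forall fun n => ?_
      exact (ContinuousLinearMap.id ℝ (ℂ →L[ℝ] ℂ)).aestronglyMeasurable_comp₂
        (((continuous_Dpow μ hμ).comp (hFc n)).aestronglyMeasurable) hf'2.1.restrict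
    · refine Filter.Eventually.of_forall fun n => Filter.Eventually.of_forall fun t ht => ?_
      calc ‖Dpow μ (F n t) (f' t)‖ ≤ ‖Dpow μ (F n t)‖ * ‖f' t‖ :=
          ContinuousLinearMap.le_opNorm _ _
      _ ≤ K * ‖f' t‖ := mul_le_mul_of_nonneg_right (hDF n t (hsub ht)) (norm_nonneg _)
    · exact (memL2_intervalIntegrable hf'2 x y).norm.const_mul K
    · refine Filter.Eventually.of_forall fun t ht => ?_
      have hFt : Filter.Tendsto (fun n => F n t) Filter.atTop (nhds (f t)) := by
        rw [tendsto_iff_norm_sub_tendsto_zero]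
        exact squeeze_zero (fun n => norm_nonneg _)
          (fun n => hFsub n t (hsub ht)) hIseq_tend
      have hD : Filter.Tendsto (fun n => Dpow μ (F n t)) Filter.atTop
          (nhds (Dpow μ (f t))) := by
        have := ((continuous_Dpow μ hμ).continuousAt (x := f t)).tendsto.comp hFt
        simpa [Function.comp_def] using this
      have happ := (isBoundedBilinearMap_apply.continuous.tendsto
        (Dpow μ (f t), f' t)).comp (hD.prodMk_nhds tendsto_const_nhds)
      simpa [Function.comp_def] using happ
  have hterm2_tend : Filter.Tendsto (fun n => ∫ t in x..y, Dpow μ (F n t) (g n t - f' t))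
      Filter.atTop (nhds 0) := by
    refine squeeze_zero_norm (fun n => hterm2 n) ?_
    have := hIseq_tend.const_mul K
    simpa using this
  have hRHS : Filter.Tendsto (fun n => ∫ t in x..y, Dpow μ (F n t) (g n t)) Filter.atTop
      (nhds (∫ t in x..y, Dpow μ (f t) (f' t))) := by
    have heq3 : (fun n => ∫ t in x..y, Dpow μ (F n t) (g n t))
        = fun n => (∫ t in x..y, Dpow μ (F n t) (f' t))
          + ∫ t in x..y, Dpow μ (F n t) (g n t - f' t) := funext hsplit
    rw [heq3]
    have := hDCT.add hterm2_tend
    simpa using this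
  have hLHS2 : Filter.Tendsto (fun n => ∫ t in x..y, Dpow μ (F n t) (g n t)) Filter.atTop
      (nhds (Npow μ (f y) - Npow μ (f x))) := by
    have heq4 : (fun n => Npow μ (F n y) - Npow μ (F n x))
        = fun n => ∫ t in x..y, Dpow μ (F n t) (g n t) := funext heqn
    rwa [heq4] at hLHS
  exact tendsto_nhds_unique hLHS2 hRHS
lemma L1_le_L2_unit {u : ℝ → ℂ} (h : MemLp u 2 volume) {s : Set ℝ} (hs : volume s = 1) :
    ∫ t in s, ‖u t‖ ∂volume ≤ L2norm u := by
  have hvol : volume s < ⊤ := by rw [hs]; exact ENNReal.one_lt_top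
  have hint : IntegrableOn u s volume := memL2_integrableOn h hvol
  have h1 : ENNReal.ofReal (∫ t in s, ‖u t‖ ∂volume) = ∫⁻ t in s, ‖u t‖₊ ∂volume :=
    ofReal_integral_norm_eq_lintegral_enorm hint
  have h2 : (∫⁻ t in s, ‖u t‖₊ ∂volume) ≤ eLpNorm u 2 volume := by
    have e1 : (∫⁻ t in s, ‖u t‖₊ ∂volume) = eLpNorm u 1 (volume.restrict s) := by
      rw [eLpNorm_one_eq_lintegral_enorm]; rfl
    rw [e1]
    have h3 := eLpNorm_le_eLpNorm_mul_rpow_measure_univ (p := 1) (q := 2)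
      (f := u) (μ := volume.restrict s) one_le_two h.1.restrict
    refine h3.trans ?_
    have e2 : (volume.restrict s) Set.univ ^ ((1:ℝ)/(1:ENNReal).toReal - 1/(2:ENNReal).toReal)
        = 1 := by
      rw [Measure.restrict_apply_univ, hs, ENNReal.one_rpow]
    rw [e2, mul_one]
    exact eLpNorm_mono_measure _ Measure.restrict_le_self
  have h4 : (∫ t in s, ‖u t‖ ∂volume) = (ENNReal.ofReal (∫ t in s, ‖u t‖ ∂volume)).toReal := by
    rw [ENNReal.toReal_ofReal (integral_nonneg fun t => norm_nonneg _)]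
  rw [h4, h1]
  exact ENNReal.toReal_mono h.2.ne h2

lemma pointwise_bound {f f' : ℝ → ℂ} (h : IsH1 f f') (t : ℝ) :
    ‖f t‖ ≤ L2norm f + L2norm f' := by
  obtain ⟨hf2, hf'2, hftc⟩ := h
  set s : Set ℝ := Set.Icc (t-1) t with hsdef
  have hs : volume s = 1 := by rw [hsdef, Real.volume_Icc]; norm_num
  have hvol : volume s < ⊤ := by rw [hs]; exact ENNReal.one_lt_top
  set B : ℝ := ∫ u in s, ‖f' u‖ ∂volume with hB
  have key : ∀ y ∈ s, ‖f t‖ ≤ ‖f y‖ + B := by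
    intro y hy
    have h1 : f t = f y + ∫ u in y..t, f' u := by rw [← hftc y t]; ring
    have h2 : ‖∫ u in y..t, f' u‖ ≤ B := by
      calc ‖∫ u in y..t, f' u‖ ≤ ∫ u in Set.uIoc y t, ‖f' u‖ ∂volume :=
          intervalIntegral.norm_integral_le_integral_norm_uIoc
      _ ≤ B := by
          refine setIntegral_mono_set (memL2_integrableOn hf'2 hvol).norm
            (Filter.Eventually.of_forall fun u => norm_nonneg _)
            (Filter.Eventually.of_forall fun u hu => ?_)
          rw [Set.uIoc_of_le hy.2] at hu
          exact ⟨le_trans hy.1 hu.1.le, hu.2⟩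
    calc ‖f t‖ = ‖f y + ∫ u in y..t, f' u‖ := by rw [← h1]
    _ ≤ ‖f y‖ + ‖∫ u in y..t, f' u‖ := norm_add_le _ _
    _ ≤ ‖f y‖ + B := by linarith
  have hfint : IntegrableOn (fun y => ‖f y‖) s volume := (memL2_integrableOn hf2 hvol).norm
  have hconst : ∫ (_ : ℝ) in s, (‖f t‖ : ℝ) ∂volume = ‖f t‖ := by
    rw [setIntegral_const, measureReal_def, hs]
    simp
  have hmono : ∫ (_ : ℝ) in s, (‖f t‖ : ℝ) ∂volume ≤ ∫ y in s, (‖f y‖ + B) ∂volume := by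
    refine setIntegral_mono_on (integrableOn_const hvol.ne)
      (hfint.add (integrableOn_const hvol.ne)) measurableSet_Icc key
  have hsum : ∫ y in s, (‖f y‖ + B) ∂volume = (∫ y in s, ‖f y‖ ∂volume) + B := by
    rw [integral_add hfint (integrableOn_const hvol.ne), setIntegral_const, measureReal_def, hs]
    simp
  have hf_le : (∫ y in s, ‖f y‖ ∂volume) ≤ L2norm f := L1_le_L2_unit hf2 hs
  have hf'_le : B ≤ L2norm f' := L1_le_L2_unit hf'2 hs
  calc ‖f t‖ = ∫ (_ : ℝ) in s, (‖f t‖ : ℝ) ∂volume := hconst.symm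
  _ ≤ (∫ y in s, ‖f y‖ ∂volume) + B := by rw [← hsum]; exact hmono
  _ ≤ L2norm f + L2norm f' := add_le_add hf_le hf'_le

lemma L2norm_le_of_bound {u v : ℝ → ℂ} (hv : MemLp v 2 volume) (hu : AEStronglyMeasurable u volume)
    (c : ℝ) (hc : 0 ≤ c) (h : ∀ t, ‖u t‖ ≤ c * ‖v t‖) : L2norm u ≤ c * L2norm v := by
  have h1 : eLpNorm u 2 volume ≤ eLpNorm (fun t => c • v t) 2 volume :=
    eLpNorm_mono fun t => by
      rw [norm_smul, Real.norm_eq_abs, abs_of_nonneg hc]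
      exact h t
  rw [show (fun t => c • v t) = c • v from rfl, eLpNorm_const_smul] at h1
  have h2 : (‖c‖₊ : ENNReal) • eLpNorm v 2 volume ≠ ⊤ := by
    refine ENNReal.mul_ne_top ?_ hv.2.ne
    simp
  unfold L2norm
  calc (eLpNorm u 2 volume).toReal ≤ ((‖c‖₊ : ENNReal) • eLpNorm v 2 volume).toReal :=
      ENNReal.toReal_mono h2 h1
  _ = c * (eLpNorm v 2 volume).toReal := by
      rw [smul_eq_mul, ENNReal.toReal_mul]
      congr 1
      simp [Real.norm_eq_abs, abs_of_nonneg hc]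

lemma memL2_of_bound {u v : ℝ → ℂ} (hv : MemLp v 2 volume)
    (hu : AEStronglyMeasurable u volume) (c : ℝ) (h : ∀ t, ‖u t‖ ≤ c * ‖v t‖) :
    MemLp u 2 volume :=
  hv.of_le_mul hu (Filter.Eventually.of_forall h)

/-- For μ > 0 and f ∈ H¹(ℝ) ∩ L^∞(ℝ), the function g(x) = |f(x)|^{2μ} f(x) is in
H¹(ℝ) with ‖g‖_{H¹} ≤ c ‖f‖_{H¹}^{2μ+1}, c depending only on μ. -/
theorem power_nonlinearity_H1 (μ : ℝ) (hμ : 0 < μ) :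
    ∃ c : ℝ, 0 < c ∧ ∀ f f' : ℝ → ℂ, IsH1 f f' → (∃ M : ℝ, ∀ x, ‖f x‖ ≤ M) →
      ∃ g' : ℝ → ℂ,
        IsH1 (fun x => (Complex.ofReal (‖f x‖ ^ (2 * μ))) * f x) g' ∧
        H1norm (fun x => (Complex.ofReal (‖f x‖ ^ (2 * μ))) * f x) g'
          ≤ c * H1norm f f' ^ (2 * μ + 1) := by
  refine ⟨(2*μ+1) * 2 ^ (2*μ), by positivity, ?_⟩
  intro f f' hH1 hMex
  obtain ⟨hf2, hf'2, hftc⟩ := hH1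
  obtain ⟨M, hM⟩ := hMex
  have hfc : Continuous f := IsH1.continuous ⟨hf2, hf'2, hftc⟩
  have ha : 0 ≤ L2norm f := ENNReal.toReal_nonneg
  have hb : 0 ≤ L2norm f' := ENNReal.toReal_nonneg
  set S : ℝ := L2norm f + L2norm f' with hSdef
  have hS0 : 0 ≤ S := by positivity
  have hpt : ∀ t, ‖f t‖ ≤ S := fun t => pointwise_bound ⟨hf2, hf'2, hftc⟩ t
  set g' : ℝ → ℂ := fun t => Dpow μ (f t) (f' t) with hg'def
  have hNmeas : AEStronglyMeasurable (fun t => Npow μ (f t)) volume :=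
    ((continuous_Npow μ hμ).comp hfc).aestronglyMeasurable
  have hg'meas : AEStronglyMeasurable g' volume :=
    (ContinuousLinearMap.id ℝ (ℂ →L[ℝ] ℂ)).aestronglyMeasurable_comp₂
      (((continuous_Dpow μ hμ).comp hfc).aestronglyMeasurable) hf'2.1
  have hNb : ∀ t, ‖Npow μ (f t)‖ ≤ S ^ (2*μ) * ‖f t‖ := by
    intro t
    have he : ‖Npow μ (f t)‖ = ‖f t‖ ^ (2*μ) * ‖f t‖ := by
      unfold Npow
      rw [norm_mul, Complex.norm_real, Real.norm_eq_abs,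
        abs_of_nonneg (by positivity : (0:ℝ) ≤ ‖f t‖ ^ (2*μ))]
    rw [he]
    exact mul_le_mul_of_nonneg_right
      (Real.rpow_le_rpow (norm_nonneg _) (hpt t) (by positivity)) (norm_nonneg _)
  have hg'b : ∀ t, ‖g' t‖ ≤ ((2*μ+1) * S ^ (2*μ)) * ‖f' t‖ := by
    intro t
    calc ‖g' t‖ ≤ ‖Dpow μ (f t)‖ * ‖f' t‖ := ContinuousLinearMap.le_opNorm _ _
    _ ≤ ((2*μ+1) * ‖f t‖ ^ (2*μ)) * ‖f' t‖ :=
        mul_le_mul_of_nonneg_right (norm_Dpow_le μ hμ _) (norm_nonneg _)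
    _ ≤ ((2*μ+1) * S ^ (2*μ)) * ‖f' t‖ := by
        refine mul_le_mul_of_nonneg_right ?_ (norm_nonneg _)
        refine mul_le_mul_of_nonneg_left ?_ (by linarith)
        exact Real.rpow_le_rpow (norm_nonneg _) (hpt t) (by positivity)
  have hN2 : MemLp (fun t => Npow μ (f t)) 2 volume := memL2_of_bound hf2 hNmeas _ hNb
  have hg'2 : MemLp g' 2 volume := memL2_of_bound hf'2 hg'meas _ hg'b
  refine ⟨g', ⟨hN2, hg'2, fun x y => key_ftc μ hμ f f' ⟨hf2, hf'2, hftc⟩ M hM x y⟩, ?_⟩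
  have hA : L2norm (fun t => Npow μ (f t)) ≤ S ^ (2*μ) * L2norm f :=
    L2norm_le_of_bound hf2 hNmeas _ (by positivity) hNb
  have hB : L2norm g' ≤ ((2*μ+1) * S ^ (2*μ)) * L2norm f' :=
    L2norm_le_of_bound hf'2 hg'meas _ (by positivity) hg'b
  have hA0 : 0 ≤ L2norm (fun t => Npow μ (f t)) := ENNReal.toReal_nonneg
  have hB0 : 0 ≤ L2norm g' := ENNReal.toReal_nonneg
  set H : ℝ := H1norm f f' with hHdef
  have hH0 : 0 ≤ H := Real.sqrt_nonneg _
  have haH : L2norm f ≤ H := by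
    rw [hHdef, show L2norm f = Real.sqrt ((L2norm f)^2) from (Real.sqrt_sq ha).symm]
    exact Real.sqrt_le_sqrt (by nlinarith [sq_nonneg (L2norm f')])
  have hbH : L2norm f' ≤ H := by
    rw [hHdef, show L2norm f' = Real.sqrt ((L2norm f')^2) from (Real.sqrt_sq hb).symm]
    exact Real.sqrt_le_sqrt (by nlinarith [sq_nonneg (L2norm f)])
  set KK : ℝ := (2*μ+1) * S ^ (2*μ) with hKKdef
  have hKK0 : 0 ≤ KK := by positivity
  have hA' : L2norm (fun t => Npow μ (f t)) ≤ KK * L2norm f := by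
    refine hA.trans (mul_le_mul_of_nonneg_right ?_ ha)
    rw [hKKdef]
    nlinarith [Real.rpow_nonneg hS0 (2*μ)]
  have hgoal1 : H1norm (fun t => Npow μ (f t)) g' ≤ KK * H := by
    rw [hHdef]
    unfold H1norm
    calc Real.sqrt ((L2norm (fun t => Npow μ (f t)))^2 + (L2norm g')^2)
        ≤ Real.sqrt (KK^2 * ((L2norm f)^2 + (L2norm f')^2)) := by
          refine Real.sqrt_le_sqrt ?_
          nlinarith [hA', hB, hA0, hB0, mul_le_mul_of_nonneg_right hB hb]
    _ = KK * Real.sqrt ((L2norm f)^2 + (L2norm f')^2) := by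
          rw [Real.sqrt_mul (sq_nonneg KK), Real.sqrt_sq hKK0]
  have hKK_le : KK ≤ (2*μ+1) * (2 ^ (2*μ) * H ^ (2*μ)) := by
    rw [hKKdef]
    refine mul_le_mul_of_nonneg_left ?_ (by linarith)
    calc S ^ (2*μ) ≤ (2*H) ^ (2*μ) :=
        Real.rpow_le_rpow hS0 (by linarith) (by positivity)
    _ = 2 ^ (2*μ) * H ^ (2*μ) := Real.mul_rpow (by norm_num) hH0
  calc H1norm (fun x => (Complex.ofReal (‖f x‖ ^ (2 * μ))) * f x) g' ≤ KK * H := hgoal1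
  _ ≤ ((2*μ+1) * (2 ^ (2*μ) * H ^ (2*μ))) * H := mul_le_mul_of_nonneg_right hKK_le hH0
  _ = ((2*μ+1) * 2 ^ (2*μ)) * (H ^ (2*μ) * H) := by ring
  _ = ((2*μ+1) * 2 ^ (2*μ)) * H ^ (2*μ+1) := by
      rw [Real.rpow_add' hH0 (by positivity), Real.rpow_one]
end

section
/- Let μ ≥ 0, M > 0 and f ∈ H^1(ℝ) with ‖f‖_{H^1} ≤ M, and let V ∈ L^1(ℝ, (1+|x|)dx). Then for every ε ∈ (0,1] and every y₀ ∈ ℝ, |∫_ℝ V(x) |f(y₀+εx)|^{2μ+2} dx − (∫_ℝ V dx) |f(y₀)|^{2μ+2}| ≤ c √ε, where c depends only on μ, M and ∫ √|x| |V(x)| dx. -/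
open MeasureTheory

-- Cauchy–Schwarz for a set integral of the norm of an L² function.
lemma cs_set_integral {g : ℝ → ℂ} (hg : MemLp g 2 volume) {s : Set ℝ} {c : ℝ}
    (hc : 0 ≤ c) (hvol : volume s = ENNReal.ofReal c) :
    ∫ t in s, ‖g t‖ ≤ (eLpNorm g 2 volume).toReal * Real.sqrt c := by
  haveI hfin : IsFiniteMeasure (volume.restrict s) :=
    ⟨by rw [Measure.restrict_apply_univ, hvol]; exact ENNReal.ofReal_lt_top⟩
  have hpq : (2:ℝ).HolderConjugate 2 := Real.holderConjugate_iff.mpr ⟨one_lt_two, by norm_num⟩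
  have hg2 : MemLp g (ENNReal.ofReal (2:ℝ)) (volume.restrict s) := by
    have := hg.restrict s; simpa using this
  have h1 : MemLp (fun _ : ℝ => (1:ℂ)) (ENNReal.ofReal (2:ℝ)) (volume.restrict s) :=
    memLp_const 1
  have key := integral_mul_norm_le_Lp_mul_Lq hpq hg2 h1
  simp only [norm_one, mul_one, Real.one_rpow] at key
  have hconst : ∫ _ in s, (1:ℝ) = c := by
    simp [measureReal_def, hvol, ENNReal.toReal_ofReal hc]
  rw [hconst] at key
  have hnn : Integrable (fun x => ‖g x‖ ^ (2:ℝ)) volume := by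
    have := hg.integrable_norm_rpow two_ne_zero ENNReal.ofNat_ne_top
    simpa using this
  have hsub : ∫ a in s, ‖g a‖ ^ (2:ℝ) ≤ ∫ a, ‖g a‖ ^ (2:ℝ) :=
    setIntegral_le_integral hnn
      (Filter.Eventually.of_forall fun x => Real.rpow_nonneg (norm_nonneg _) _)
  have hnorm : (eLpNorm g 2 volume).toReal = (∫ a, ‖g a‖ ^ (2:ℝ)) ^ ((1:ℝ)/2) := by
    rw [hg.eLpNorm_eq_integral_rpow_norm two_ne_zero ENNReal.ofNat_ne_top]
    rw [ENNReal.toReal_ofReal (Real.rpow_nonneg (integral_nonneg fun x =>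
      Real.rpow_nonneg (norm_nonneg _) _) _)]
    norm_num
  calc ∫ t in s, ‖g t‖ ≤ (∫ a in s, ‖g a‖ ^ (2:ℝ)) ^ ((1:ℝ)/2) * c ^ ((1:ℝ)/2) := key
    _ ≤ (∫ a, ‖g a‖ ^ (2:ℝ)) ^ ((1:ℝ)/2) * c ^ ((1:ℝ)/2) := by
        apply mul_le_mul_of_nonneg_right _ (Real.rpow_nonneg hc _)
        exact Real.rpow_le_rpow (integral_nonneg fun x => Real.rpow_nonneg (norm_nonneg _) _)
          hsub (by norm_num)
    _ = (eLpNorm g 2 volume).toReal * Real.sqrt c := by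
        rw [hnorm, Real.sqrt_eq_rpow]

lemma l2_intervalIntegrable {g : ℝ → ℂ} (hg : MemLp g 2 volume) (a b : ℝ) :
    IntervalIntegrable g volume a b := by
  refine ⟨?_, ?_⟩
  · haveI : IsFiniteMeasure (volume.restrict (Set.Ioc a b)) :=
      ⟨by rw [Measure.restrict_apply_univ, Real.volume_Ioc]; exact ENNReal.ofReal_lt_top⟩
    exact (hg.restrict _).integrable one_le_two
  · haveI : IsFiniteMeasure (volume.restrict (Set.Ioc b a)) :=
      ⟨by rw [Measure.restrict_apply_univ, Real.volume_Ioc]; exact ENNReal.ofReal_lt_top⟩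
    exact (hg.restrict _).integrable one_le_two

lemma holder_bound {f f' : ℝ → ℂ} (hf' : MemLp f' 2 volume)
    (hff' : ∀ x y : ℝ, f y - f x = ∫ t in x..y, f' t) (a b : ℝ) :
    ‖f b - f a‖ ≤ (eLpNorm f' 2 volume).toReal * Real.sqrt |b - a| := by
  wlog hab : a ≤ b generalizing a b
  · rw [← norm_neg, neg_sub, ← abs_neg, neg_sub]
    exact this b a (le_of_not_ge hab)
  rw [hff' a b]
  calc ‖∫ t in a..b, f' t‖ ≤ ∫ t in a..b, ‖f' t‖ :=
        intervalIntegral.norm_integral_le_integral_norm hab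
    _ = ∫ t in Set.Ioc a b, ‖f' t‖ := intervalIntegral.integral_of_le hab
    _ ≤ (eLpNorm f' 2 volume).toReal * Real.sqrt (b - a) :=
        cs_set_integral hf' (by linarith) (Real.volume_Ioc)
    _ = (eLpNorm f' 2 volume).toReal * Real.sqrt |b - a| := by
        rw [abs_of_nonneg (by linarith)]

lemma sup_bound {f f' : ℝ → ℂ} (hf : MemLp f 2 volume) (hf' : MemLp f' 2 volume)
    (hff' : ∀ x y : ℝ, f y - f x = ∫ t in x..y, f' t) (x : ℝ) :
    ‖f x‖ ≤ (eLpNorm f 2 volume).toReal + (eLpNorm f' 2 volume).toReal := by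
  set K := (eLpNorm f 2 volume).toReal
  set K' := (eLpNorm f' 2 volume).toReal
  have hK' : 0 ≤ K' := ENNReal.toReal_nonneg
  have hpt : ∀ y ∈ Set.Ioc x (x+1), ‖f x‖ - K' ≤ ‖f y‖ := by
    intro y hy
    have h1 : ‖f x‖ ≤ ‖f y‖ + ‖f x - f y‖ := by
      have := norm_sub_norm_le (f x) (f y); linarith [norm_sub_rev (f x) (f y)]
    have h2 : ‖f x - f y‖ ≤ K' * Real.sqrt |x - y| := holder_bound hf' hff' y x
    have h3 : Real.sqrt |x - y| ≤ 1 := by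
      rw [show (1:ℝ) = Real.sqrt 1 by simp]
      apply Real.sqrt_le_sqrt
      rw [abs_of_nonpos (by linarith [hy.1])]
      linarith [hy.2]
    nlinarith
  haveI : IsFiniteMeasure (volume.restrict (Set.Ioc x (x+1))) :=
    ⟨by rw [Measure.restrict_apply_univ, Real.volume_Ioc]; exact ENNReal.ofReal_lt_top⟩
  have hfi : Integrable (fun y => ‖f y‖) (volume.restrict (Set.Ioc x (x+1))) :=
    ((hf.restrict _).integrable one_le_two).norm
  have hint : ∫ y in Set.Ioc x (x+1), (‖f x‖ - K') ≤ ∫ y in Set.Ioc x (x+1), ‖f y‖ :=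
    setIntegral_mono_on (integrable_const _) hfi measurableSet_Ioc hpt
  have hconst : ∫ _ in Set.Ioc x (x+1), (‖f x‖ - K') = ‖f x‖ - K' := by
    simp [Real.volume_Ioc]
  have hcs : ∫ y in Set.Ioc x (x+1), ‖f y‖ ≤ K * Real.sqrt 1 := by
    apply cs_set_integral hf zero_le_one
    rw [Real.volume_Ioc]; norm_num
  rw [hconst] at hint
  simp only [Real.sqrt_one, mul_one] at hcs
  linarith

lemma rpow_diff_bound {p B s t : ℝ} (hp : 1 ≤ p) (hs : 0 ≤ s) (ht : 0 ≤ t)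
    (hsB : s ≤ B) (htB : t ≤ B) :
    |s ^ p - t ^ p| ≤ p * B ^ (p - 1) * |s - t| := by
  wlog hts : t ≤ s generalizing s t
  · rw [← abs_neg, neg_sub, ← abs_neg (s - t), neg_sub]
    exact this ht hs htB hsB (le_of_not_ge hts)
  have hB : 0 ≤ B := le_trans hs hsB
  rcases eq_or_lt_of_le hts with h | h
  · subst h; simp
  have hcont : ContinuousOn (fun u : ℝ => u ^ p) (Set.Icc t s) := fun u _ =>
    (Real.continuousAt_rpow_const u p (Or.inr (by linarith))).continuousWithinAt
  obtain ⟨c, hc, hceq⟩ := exists_hasDerivAt_eq_slope (fun u : ℝ => u ^ p)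
    (fun u => p * u ^ (p - 1)) h hcont
    (fun u _ => Real.hasDerivAt_rpow_const (Or.inr hp))
  have hcs : s ^ p - t ^ p = p * c ^ (p - 1) * (s - t) := by
    have hne : s - t ≠ 0 := by intro h0; rw [sub_eq_zero] at h0; exact absurd h0.symm (ne_of_lt h)
    rw [eq_div_iff hne] at hceq
    linarith [hceq]
  have hmono : t ^ p ≤ s ^ p := Real.rpow_le_rpow ht hts (by linarith)
  have hcB : c ^ (p - 1) ≤ B ^ (p - 1) :=
    Real.rpow_le_rpow (le_of_lt (lt_of_le_of_lt ht hc.1)) (le_trans (le_of_lt hc.2) hsB)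
      (by linarith)
  rw [abs_of_nonneg (by linarith : (0:ℝ) ≤ s ^ p - t ^ p), abs_of_nonneg (by linarith)]
  rw [hcs]
  have h1 := mul_le_mul_of_nonneg_left hcB (by linarith : (0:ℝ) ≤ p)
  exact mul_le_mul_of_nonneg_right h1 (by linarith)

/-- For μ ≥ 0, ‖f‖_{H¹} ≤ M and V ∈ L¹(ℝ,(1+|x|)dx), the scaled averages of
|f|^{2μ+2} against V converge at rate √ε to (∫V)|f(y₀)|^{2μ+2}, with constant
depending only on μ, M and J = ∫√|x||V|. -/
theorem scaled_power_average_estimate (μ M J : ℝ) (hμ : 0 ≤ μ) (hM : 0 < M) :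
    ∃ c : ℝ, 0 < c ∧ ∀ (V : ℝ → ℝ) (f f' : ℝ → ℂ),
      Integrable V → Integrable (fun x => (1 + |x|) * |V x|) →
      (∫ x, Real.sqrt |x| * |V x|) = J →
      IsH1 f f' → H1norm f f' ≤ M →
      ∀ ε ∈ Set.Ioc (0 : ℝ) 1, ∀ y₀ : ℝ,
        |(∫ x, V x * ‖f (y₀ + ε * x)‖ ^ (2 * μ + 2)) - (∫ x, V x) * ‖f y₀‖ ^ (2 * μ + 2)|
          ≤ c * Real.sqrt ε := by
  have hp1 : 1 ≤ 2 * μ + 2 := by linarith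
  have hL0 : 0 ≤ (2 * μ + 2) * (2 * M) ^ (2 * μ + 2 - 1) * M := by positivity
  refine ⟨(2 * μ + 2) * (2 * M) ^ (2 * μ + 2 - 1) * M * |J| + 1, by positivity, ?_⟩
  set L := (2 * μ + 2) * (2 * M) ^ (2 * μ + 2 - 1) * M with hLdef
  intro V f f' hV hV1 hJ hH1 hM1 ε hε y₀
  obtain ⟨hf, hf', hff'⟩ := hH1
  set K := (eLpNorm f 2 volume).toReal with hKdef
  set K' := (eLpNorm f' 2 volume).toReal with hK'def
  have hK0 : 0 ≤ K := ENNReal.toReal_nonneg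
  have hK'0 : 0 ≤ K' := ENNReal.toReal_nonneg
  unfold H1norm L2norm at hM1
  rw [← hKdef, ← hK'def] at hM1
  have hKM : K ≤ M := by
    have h1 : K = Real.sqrt (K ^ 2) := (Real.sqrt_sq hK0).symm
    rw [h1]
    exact le_trans (Real.sqrt_le_sqrt (by nlinarith)) hM1
  have hK'M : K' ≤ M := by
    have h1 : K' = Real.sqrt (K' ^ 2) := (Real.sqrt_sq hK'0).symm
    rw [h1]
    exact le_trans (Real.sqrt_le_sqrt (by nlinarith)) hM1
  have hB : ∀ x, ‖f x‖ ≤ 2 * M := fun x =>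
    le_trans (sup_bound hf hf' hff' x) (by rw [← hKdef, ← hK'def]; linarith)
  -- Hölder continuity of ‖f ·‖ ^ (2μ+2)
  have hg : ∀ a b : ℝ, |‖f a‖ ^ (2 * μ + 2) - ‖f b‖ ^ (2 * μ + 2)|
      ≤ L * Real.sqrt |a - b| := by
    intro a b
    have step1 := rpow_diff_bound hp1 (norm_nonneg (f a)) (norm_nonneg (f b)) (hB a) (hB b)
    have step2 : |‖f a‖ - ‖f b‖| ≤ ‖f a - f b‖ := abs_norm_sub_norm_le _ _
    have step3 : ‖f a - f b‖ ≤ K' * Real.sqrt |a - b| := holder_bound hf' hff' b a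
    have hc0 : (0:ℝ) ≤ (2 * μ + 2) * (2 * M) ^ (2 * μ + 2 - 1) := by positivity
    calc |‖f a‖ ^ (2 * μ + 2) - ‖f b‖ ^ (2 * μ + 2)|
        ≤ (2 * μ + 2) * (2 * M) ^ (2 * μ + 2 - 1) * |‖f a‖ - ‖f b‖| := step1
      _ ≤ (2 * μ + 2) * (2 * M) ^ (2 * μ + 2 - 1) * (K' * Real.sqrt |a - b|) :=
          mul_le_mul_of_nonneg_left (le_trans step2 step3) hc0
      _ ≤ L * Real.sqrt |a - b| := by
          rw [hLdef]
          have := mul_le_mul_of_nonneg_left hK'M hc0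
          nlinarith [Real.sqrt_nonneg |a - b|]
  -- continuity of f
  have hfc : Continuous f := by
    have h1 : f = fun y => f 0 + ∫ t in (0:ℝ)..y, f' t := by
      funext y
      have h := hff' 0 y
      rw [← h]; ring
    rw [h1]
    exact continuous_const.add
      (intervalIntegral.continuous_primitive (fun a b => l2_intervalIntegrable hf' a b) 0)
  have hgc : Continuous (fun x : ℝ => ‖f (y₀ + ε * x)‖ ^ (2 * μ + 2)) :=
    (Real.continuous_rpow_const (by linarith)).comp
      ((hfc.comp (continuous_const.add (continuous_const.mul continuous_id))).norm)
  -- integrabilities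
  have hVg : Integrable (fun x => V x * ‖f (y₀ + ε * x)‖ ^ (2 * μ + 2)) volume := by
    have := hV.bdd_mul hgc.aestronglyMeasurable
      (c := (2 * M) ^ (2 * μ + 2)) (Filter.Eventually.of_forall fun x => by
        rw [Real.norm_eq_abs, abs_of_nonneg (Real.rpow_nonneg (norm_nonneg _) _)]
        exact Real.rpow_le_rpow (norm_nonneg _) (hB _) (by linarith))
    simpa [mul_comm] using this
  have hVc : Integrable (fun x => V x * ‖f y₀‖ ^ (2 * μ + 2)) volume := hV.mul_const _
  have hVs : Integrable (fun x => Real.sqrt |x| * |V x|) volume := by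
    apply hV1.mono'
      ((Real.continuous_sqrt.comp continuous_abs).aestronglyMeasurable.mul hV.abs.1)
    filter_upwards with x
    simp only [Pi.mul_apply, Function.comp_apply]
    rw [Real.norm_eq_abs, abs_mul, abs_of_nonneg (Real.sqrt_nonneg _), abs_abs]
    apply mul_le_mul_of_nonneg_right _ (abs_nonneg _)
    have h2 : Real.sqrt |x| ≤ Real.sqrt ((1 + |x|) ^ 2) :=
      Real.sqrt_le_sqrt (by nlinarith [abs_nonneg x])
    rwa [Real.sqrt_sq (by positivity)] at h2
  have hJ0 : 0 ≤ J := by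
    rw [← hJ]
    exact integral_nonneg fun x => mul_nonneg (Real.sqrt_nonneg _) (abs_nonneg _)
  -- main computation
  have heq : (∫ x, V x * ‖f (y₀ + ε * x)‖ ^ (2 * μ + 2)) - (∫ x, V x) * ‖f y₀‖ ^ (2 * μ + 2)
      = ∫ x, V x * (‖f (y₀ + ε * x)‖ ^ (2 * μ + 2) - ‖f y₀‖ ^ (2 * μ + 2)) := by
    rw [← integral_mul_const, ← integral_sub hVg hVc]
    congr 1; funext x; ring
  rw [heq]
  have hεpos := hε.1
  have hsε := Real.sqrt_nonneg ε
  calc |∫ x, V x * (‖f (y₀ + ε * x)‖ ^ (2 * μ + 2) - ‖f y₀‖ ^ (2 * μ + 2))|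
      ≤ ∫ x, |V x| * |‖f (y₀ + ε * x)‖ ^ (2 * μ + 2) - ‖f y₀‖ ^ (2 * μ + 2)| := by
        simpa [Real.norm_eq_abs, abs_mul] using norm_integral_le_integral_norm
          (μ := volume)
          (fun x => V x * (‖f (y₀ + ε * x)‖ ^ (2 * μ + 2) - ‖f y₀‖ ^ (2 * μ + 2)))
    _ ≤ ∫ x, L * Real.sqrt ε * (Real.sqrt |x| * |V x|) := by
        apply integral_mono_of_nonneg
          (Filter.Eventually.of_forall fun x => mul_nonneg (abs_nonneg _) (abs_nonneg _))
          (hVs.const_mul (L * Real.sqrt ε))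
        filter_upwards with x
        have hd : |‖f (y₀ + ε * x)‖ ^ (2 * μ + 2) - ‖f y₀‖ ^ (2 * μ + 2)|
            ≤ L * (Real.sqrt ε * Real.sqrt |x|) := by
          have := hg (y₀ + ε * x) y₀
          have habs : |y₀ + ε * x - y₀| = ε * |x| := by
            rw [add_sub_cancel_left, abs_mul, abs_of_pos hεpos]
          rw [habs, Real.sqrt_mul (le_of_lt hεpos)] at this
          exact this
        calc |V x| * |‖f (y₀ + ε * x)‖ ^ (2 * μ + 2) - ‖f y₀‖ ^ (2 * μ + 2)|
            ≤ |V x| * (L * (Real.sqrt ε * Real.sqrt |x|)) :=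
              mul_le_mul_of_nonneg_left hd (abs_nonneg _)
          _ = L * Real.sqrt ε * (Real.sqrt |x| * |V x|) := by ring
    _ = L * Real.sqrt ε * J := by
        rw [integral_const_mul, hJ]
    _ ≤ (L * |J| + 1) * Real.sqrt ε := by
        have h1 : L * J ≤ L * |J| + 1 := by
          have := mul_le_mul_of_nonneg_left (le_abs_self J) hL0
          linarith
        calc L * Real.sqrt ε * J = L * J * Real.sqrt ε := by ring
          _ ≤ (L * |J| + 1) * Real.sqrt ε := mul_le_mul_of_nonneg_right h1 hsε
end

section
/- (Convergence of regularized energies) Let V ∈ L^1(ℝ,(1+|x|)dx) ∩ L^∞(ℝ), μ > 0, α = ∫V dx, and ψ₀ ∈ H^1(ℝ). Define E^ε(ψ₀) = ∫|ψ₀'|²dx + (μ+1)^{-1}∫ε^{-1}V(x/ε)|ψ₀(x)|^{2μ+2}dx and E(ψ₀) = ∫|ψ₀'|²dx + α(μ+1)^{-1}|ψ₀(0)|^{2μ+2}. Then E^ε(ψ₀) → E(ψ₀) as ε → 0, with rate |E^ε(ψ₀) − E(ψ₀)| ≤ c√ε. -/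
set_option maxHeartbeats 1000000

open MeasureTheory


lemma rpow_lip {p M a b : ℝ} (hp : 1 ≤ p) (hM : 0 ≤ M) (ha : 0 ≤ a) (haM : a ≤ M)
    (hb : 0 ≤ b) (hbM : b ≤ M) :
    |a ^ p - b ^ p| ≤ p * M ^ (p - 1) * |a - b| := by
  wlog hab : b ≤ a generalizing a b
  · rw [abs_sub_comm, abs_sub_comm a b]; exact this hb hbM ha haM (le_of_not_ge hab)
  have key := norm_image_sub_le_of_norm_deriv_le_segment'
    (f := fun x : ℝ => x ^ p) (f' := fun x : ℝ => p * x ^ (p - 1)) (a := b) (b := a)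
    (C := p * M ^ (p - 1))
    (fun x hx => (Real.hasDerivAt_rpow_const (Or.inr hp)).hasDerivWithinAt)
    (fun x hx => ?_) a (Set.right_mem_Icc.2 hab)
  · rw [abs_of_nonneg (sub_nonneg.2 hab)]
    simpa [Real.norm_eq_abs] using key
  · have hx0 : 0 ≤ x := le_trans hb hx.1
    rw [Real.norm_eq_abs, abs_of_nonneg (mul_nonneg (by linarith) (Real.rpow_nonneg hx0 _))]
    have h2 : x ^ (p - 1) ≤ M ^ (p - 1) :=
      Real.rpow_le_rpow hx0 (le_trans hx.2.le haM) (by linarith)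
    exact mul_le_mul_of_nonneg_left h2 (by linarith)


lemma cs_est (h : ℝ → ℂ) (hm : MemLp h 2 volume) {x y : ℝ} (hxy : x ≤ y) :
    ∫ t in x..y, ‖h t‖ ≤ Real.sqrt ((y - x) * ∫ t, ‖h t‖ ^ 2) := by
  set A := ∫ t, ‖h t‖ ^ 2 with hA
  have hsq_int : Integrable (fun t => ‖h t‖ ^ 2) := by
    have := hm.integrable_norm_rpow (by norm_num) (by norm_num)
    simpa [ENNReal.toReal_ofNat, Real.rpow_natCast] using this
  have hA0 : 0 ≤ A := integral_nonneg fun t => by positivity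
  have hloc : LocallyIntegrable h volume := hm.locallyIntegrable (by norm_num)
  have hii : IntervalIntegrable h volume x y :=
    (hloc.integrableOn_isCompact isCompact_uIcc).intervalIntegrable
  have hii2 : IntervalIntegrable (fun t => ‖h t‖ ^ 2) volume x y :=
    hsq_int.intervalIntegrable
  have hsub : ∫ t in x..y, ‖h t‖ ^ 2 ≤ A := by
    rw [intervalIntegral.integral_of_le hxy]
    exact setIntegral_le_integral hsq_int (Filter.Eventually.of_forall fun t => by positivity)
  have hcb : ∀ c : ℝ, 0 < c → (∫ t in x..y, ‖h t‖) ≤ (c * (y - x) + A / c) / 2 := by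
    intro c hc
    have hpt : ∀ t, ‖h t‖ ≤ (c + ‖h t‖ ^ 2 / c) / 2 := by
      intro t
      have h0 : 0 ≤ ‖h t‖ := norm_nonneg _
      have h2 : ‖h t‖ ^ 2 / c * c = ‖h t‖ ^ 2 := div_mul_cancel₀ _ hc.ne'
      nlinarith [sq_nonneg (c - ‖h t‖)]
    calc (∫ t in x..y, ‖h t‖) ≤ ∫ t in x..y, (c + ‖h t‖ ^ 2 / c) / 2 := by
          refine intervalIntegral.integral_mono_on hxy hii.norm ?_ fun t _ => hpt t
          exact (intervalIntegrable_const.add (hii2.div_const c)).div_const 2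
      _ = (c * (y - x) + (∫ t in x..y, ‖h t‖ ^ 2) / c) / 2 := by
          rw [intervalIntegral.integral_div, intervalIntegral.integral_add
            intervalIntegrable_const (hii2.div_const c), intervalIntegral.integral_const,
            intervalIntegral.integral_div]
          simp [smul_eq_mul]; ring
      _ ≤ (c * (y - x) + A / c) / 2 := by gcongr
  rcases eq_or_lt_of_le hxy with rfl | hlt
  · simp [Real.sqrt_nonneg]
  have hs : 0 < y - x := sub_pos.2 hlt
  rcases eq_or_lt_of_le hA0 with hA0' | hA0'
  · have : (∫ t in x..y, ‖h t‖) ≤ 0 := by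
      refine le_of_forall_pos_le_add fun ε hε => ?_
      have hle := hcb (2 * ε / (y - x)) (by positivity)
      rw [← hA0'] at hle
      refine le_trans hle (le_of_eq ?_)
      rw [zero_div, add_zero, div_mul_cancel₀ _ hs.ne']
      ring
    exact le_trans this (Real.sqrt_nonneg _)
  · have hc : 0 < Real.sqrt A / Real.sqrt (y - x) := by positivity
    refine le_trans (hcb _ hc) (le_of_eq ?_)
    have h1 : Real.sqrt A * Real.sqrt A = A := Real.mul_self_sqrt hA0
    have h2 : Real.sqrt (y - x) * Real.sqrt (y - x) = y - x := Real.mul_self_sqrt hs.le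
    rw [Real.sqrt_mul hs.le]
    have hsA : 0 < Real.sqrt A := Real.sqrt_pos.2 hA0'
    have hss : 0 < Real.sqrt (y - x) := Real.sqrt_pos.2 hs
    field_simp
    nlinarith [h1, h2]

/-- Convergence of regularized energies: E^ε(ψ₀) → E(ψ₀) as ε → 0⁺, with rate
|E^ε(ψ₀) − E(ψ₀)| ≤ c√ε, where α = ∫V. -/
theorem energy_convergence (V : ℝ → ℝ) (μ : ℝ) (hμ : 0 < μ)
    (hV : Integrable V) (hVw : Integrable (fun x => (1 + |x|) * |V x|))
    (hVb : ∃ C : ℝ, ∀ x, |V x| ≤ C)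
    (ψ0 dψ0 : ℝ → ℂ) (hψ0 : IsH1 ψ0 dψ0) :
    (∃ c : ℝ, 0 < c ∧ ∀ ε : ℝ, 0 < ε →
      |((∫ x, ‖dψ0 x‖ ^ 2) + (μ + 1)⁻¹ * ∫ x, ε⁻¹ * V (x / ε) * ‖ψ0 x‖ ^ (2 * μ + 2))
        - ((∫ x, ‖dψ0 x‖ ^ 2) + (∫ x, V x) * (μ + 1)⁻¹ * ‖ψ0 0‖ ^ (2 * μ + 2))|
        ≤ c * Real.sqrt ε) ∧
    Filter.Tendsto
      (fun ε : ℝ =>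
        (∫ x, ‖dψ0 x‖ ^ 2) + (μ + 1)⁻¹ * ∫ x, ε⁻¹ * V (x / ε) * ‖ψ0 x‖ ^ (2 * μ + 2))
      (nhdsWithin 0 (Set.Ioi 0))
      (nhds ((∫ x, ‖dψ0 x‖ ^ 2) + (∫ x, V x) * (μ + 1)⁻¹ * ‖ψ0 0‖ ^ (2 * μ + 2))) := by
  obtain ⟨hm0, hm1, hint⟩ := hψ0
  set A := ∫ x, ‖dψ0 x‖ ^ 2 with hA
  set B := ∫ x, ‖ψ0 x‖ ^ 2 with hB
  have hA0 : 0 ≤ A := integral_nonneg fun t => by positivity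
  have hB0 : 0 ≤ B := integral_nonneg fun t => by positivity
  -- Hölder continuity of ψ0
  have holder : ∀ x y : ℝ, x ≤ y → ‖ψ0 y - ψ0 x‖ ≤ Real.sqrt ((y - x) * A) := by
    intro x y hxy
    rw [hint x y]
    exact le_trans (intervalIntegral.norm_integral_le_integral_norm hxy) (cs_est dψ0 hm1 hxy)
  have holder' : ∀ x y : ℝ, ‖ψ0 y - ψ0 x‖ ≤ Real.sqrt (|y - x| * A) := by
    intro x y
    rcases le_total x y with h | h
    · rw [abs_of_nonneg (sub_nonneg.2 h)]; exact holder x y h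
    · rw [abs_of_nonpos (sub_nonpos.2 h), ← norm_neg, neg_sub]
      have := holder y x h
      simpa [neg_sub] using this
  -- continuity of ψ0
  have hcont : Continuous ψ0 := by
    have hii : ∀ a b : ℝ, IntervalIntegrable dψ0 volume a b := fun a b =>
      ((hm1.locallyIntegrable (by norm_num)).integrableOn_isCompact
        isCompact_uIcc).intervalIntegrable
    have hc : Continuous (fun b => ∫ t in (0:ℝ)..b, dψ0 t) :=
      intervalIntegral.continuous_primitive hii 0
    have he : ψ0 = fun y => ψ0 0 + ∫ t in (0:ℝ)..y, dψ0 t := by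
      funext y
      rw [← hint 0 y]; ring
    rw [he]; exact continuous_const.add hc
  have hψsq_int : Integrable (fun t => ‖ψ0 t‖ ^ 2) := by
    have := hm0.integrable_norm_rpow (by norm_num) (by norm_num)
    simpa [ENNReal.toReal_ofNat, Real.rpow_natCast] using this
  -- boundedness
  set M := Real.sqrt B + Real.sqrt A with hM
  have hM0 : 0 ≤ M := add_nonneg (Real.sqrt_nonneg _) (Real.sqrt_nonneg _)
  have hMb : ∀ x, ‖ψ0 x‖ ≤ M := by
    intro x
    obtain ⟨y, hy, hymin⟩ := isCompact_Icc.exists_isMinOn (α := ℝ)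
      (Set.nonempty_Icc.2 (by linarith : x ≤ x + 1))
      (continuous_norm.comp hcont).continuousOn
    have h1 : ‖ψ0 y‖ ≤ Real.sqrt B := by
      have hle : ‖ψ0 y‖ ^ 2 ≤ B := by
        have hc1 : ∫ _ in Set.Icc x (x+1), ‖ψ0 y‖ ^ 2 ∂volume = ‖ψ0 y‖ ^ 2 := by
          rw [setIntegral_const, Real.volume_real_Icc]
          norm_num
        have hc2 : ∫ t in Set.Icc x (x+1), ‖ψ0 y‖ ^ 2 ∂volume
            ≤ ∫ t in Set.Icc x (x+1), ‖ψ0 t‖ ^ 2 ∂volume := by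
          refine setIntegral_mono_on (integrableOn_const ?_)
            hψsq_int.integrableOn measurableSet_Icc fun t ht => ?_
          · rw [Real.volume_Icc]; norm_num
          · have := hymin ht
            simp only [Set.mem_setOf_eq, Function.comp] at this
            exact pow_le_pow_left₀ (norm_nonneg _) this 2
        have hc3 : ∫ t in Set.Icc x (x+1), ‖ψ0 t‖ ^ 2 ∂volume ≤ B :=
          setIntegral_le_integral hψsq_int (Filter.Eventually.of_forall fun t => by positivity)
        linarith [hc1 ▸ hc2]
      exact (Real.le_sqrt (norm_nonneg _) hB0).2 hle
    have h3 : ‖ψ0 x - ψ0 y‖ ≤ Real.sqrt A := by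
      refine le_trans (holder' y x) ?_
      have habs : |x - y| ≤ 1 := by
        rcases hy with ⟨hy1, hy2⟩; rw [abs_le]; constructor <;> linarith
      calc Real.sqrt (|x - y| * A) ≤ Real.sqrt (1 * A) :=
            Real.sqrt_le_sqrt (by nlinarith [abs_nonneg (x - y)])
        _ = Real.sqrt A := by rw [one_mul]
    calc ‖ψ0 x‖ = ‖ψ0 y + (ψ0 x - ψ0 y)‖ := by ring_nf
      _ ≤ ‖ψ0 y‖ + ‖ψ0 x - ψ0 y‖ := norm_add_le _ _
      _ ≤ M := by rw [hM]; exact add_le_add h1 h3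
  -- setup for the potential term
  have hp1 : (1:ℝ) ≤ 2 * μ + 2 := by linarith
  have hgcont : Continuous fun x : ℝ => ‖ψ0 x‖ ^ (2 * μ + 2) :=
    hcont.norm.rpow_const fun x => Or.inr (by linarith)
  set W := ∫ y, (1 + |y|) * |V y| with hW
  have hW0 : 0 ≤ W := integral_nonneg fun t => by positivity
  set K := (2 * μ + 2) * M ^ (2 * μ + 2 - 1) * Real.sqrt A with hK
  have hK0 : 0 ≤ K := by
    have : (0:ℝ) ≤ M ^ (2 * μ + 2 - 1) := Real.rpow_nonneg hM0 _
    positivity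
  have main : ∀ ε : ℝ, 0 < ε →
      |(∫ x, ε⁻¹ * V (x / ε) * ‖ψ0 x‖ ^ (2 * μ + 2))
        - (∫ x, V x) * ‖ψ0 0‖ ^ (2 * μ + 2)| ≤ K * W * Real.sqrt ε := by
    intro ε hε
    -- change of variables x = ε y
    have hcv : (∫ x, ε⁻¹ * V (x / ε) * ‖ψ0 x‖ ^ (2 * μ + 2))
        = ∫ y, V y * ‖ψ0 (ε * y)‖ ^ (2 * μ + 2) := by
      have h1 := MeasureTheory.Measure.integral_comp_mul_left
        (fun x => ε⁻¹ * V (x / ε) * ‖ψ0 x‖ ^ (2 * μ + 2)) ε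
      simp only [mul_div_cancel_left₀ _ hε.ne', smul_eq_mul,
        abs_of_pos (inv_pos.2 hε)] at h1
      have h2 : ∫ x, ε⁻¹ * V x * ‖ψ0 (ε * x)‖ ^ (2 * μ + 2)
          = ε⁻¹ * ∫ x, V x * ‖ψ0 (ε * x)‖ ^ (2 * μ + 2) := by
        simp_rw [mul_assoc]
        exact integral_const_mul _ _
      rw [h2] at h1
      exact (mul_left_cancel₀ (inv_ne_zero hε.ne') h1).symm
    have hgbd : ∀ z : ℝ, ‖ψ0 z‖ ^ (2 * μ + 2) ≤ M ^ (2 * μ + 2) := fun z =>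
      Real.rpow_le_rpow (norm_nonneg _) (hMb z) (by linarith)
    have hI : Integrable (fun y => V y * ‖ψ0 (ε * y)‖ ^ (2 * μ + 2)) := by
      have hmeas : Continuous fun y : ℝ => ‖ψ0 (ε * y)‖ ^ (2 * μ + 2) :=
        hgcont.comp (continuous_mul_left ε)
      have := hV.bdd_mul (f := fun y : ℝ => ‖ψ0 (ε * y)‖ ^ (2 * μ + 2)) (c := M ^ (2 * μ + 2))
        hmeas.aestronglyMeasurable
        (Filter.Eventually.of_forall fun y => by
          rw [Real.norm_eq_abs, abs_of_nonneg (Real.rpow_nonneg (norm_nonneg _) _)]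
          exact hgbd (ε * y))
      simpa [mul_comm] using this
    have hI0 : Integrable (fun y => V y * ‖ψ0 0‖ ^ (2 * μ + 2)) :=
      hV.mul_const _
    have hsplit : (∫ x, ε⁻¹ * V (x / ε) * ‖ψ0 x‖ ^ (2 * μ + 2))
        - (∫ x, V x) * ‖ψ0 0‖ ^ (2 * μ + 2)
        = ∫ y, V y * (‖ψ0 (ε * y)‖ ^ (2 * μ + 2) - ‖ψ0 0‖ ^ (2 * μ + 2)) := by
      rw [hcv, ← integral_mul_const, ← integral_sub hI hI0]
      simp_rw [mul_sub]
    rw [hsplit]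
    have hptw : ∀ y : ℝ, |V y * (‖ψ0 (ε * y)‖ ^ (2 * μ + 2) - ‖ψ0 0‖ ^ (2 * μ + 2))|
        ≤ (K * Real.sqrt ε) * ((1 + |y|) * |V y|) := by
      intro y
      rw [abs_mul]
      have e1 : |‖ψ0 (ε * y)‖ ^ (2 * μ + 2) - ‖ψ0 0‖ ^ (2 * μ + 2)|
          ≤ (2 * μ + 2) * M ^ (2 * μ + 2 - 1) * ‖ψ0 (ε * y) - ψ0 0‖ := by
        refine le_trans (rpow_lip hp1 hM0 (norm_nonneg _) (hMb _) (norm_nonneg _) (hMb _)) ?_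
        have h4 : |‖ψ0 (ε * y)‖ - ‖ψ0 0‖| ≤ ‖ψ0 (ε * y) - ψ0 0‖ := abs_norm_sub_norm_le _ _
        have h5 : (0:ℝ) ≤ (2 * μ + 2) * M ^ (2 * μ + 2 - 1) := by
          have : (0:ℝ) ≤ M ^ (2 * μ + 2 - 1) := Real.rpow_nonneg hM0 _
          positivity
        exact mul_le_mul_of_nonneg_left h4 h5
      have e2 : ‖ψ0 (ε * y) - ψ0 0‖ ≤ Real.sqrt (|ε * y| * A) := by
        simpa using holder' 0 (ε * y)
      have e3 : Real.sqrt (|ε * y| * A)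
          = Real.sqrt ε * Real.sqrt |y| * Real.sqrt A := by
        rw [abs_mul, abs_of_pos hε, Real.sqrt_mul (by positivity), Real.sqrt_mul hε.le]
      have e4 : Real.sqrt |y| ≤ 1 + |y| := by
        rw [show (1 + |y|) = Real.sqrt ((1 + |y|) ^ 2) from
          (Real.sqrt_sq (by positivity)).symm]
        exact Real.sqrt_le_sqrt (by nlinarith [abs_nonneg y])
      have e5 : |‖ψ0 (ε * y)‖ ^ (2 * μ + 2) - ‖ψ0 0‖ ^ (2 * μ + 2)|
          ≤ K * Real.sqrt ε * (1 + |y|) := by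
        have h5 : (0:ℝ) ≤ (2 * μ + 2) * M ^ (2 * μ + 2 - 1) := by
          have : (0:ℝ) ≤ M ^ (2 * μ + 2 - 1) := Real.rpow_nonneg hM0 _
          positivity
        calc |‖ψ0 (ε * y)‖ ^ (2 * μ + 2) - ‖ψ0 0‖ ^ (2 * μ + 2)|
            ≤ (2 * μ + 2) * M ^ (2 * μ + 2 - 1) * ‖ψ0 (ε * y) - ψ0 0‖ := e1
          _ ≤ (2 * μ + 2) * M ^ (2 * μ + 2 - 1)
              * (Real.sqrt ε * Real.sqrt |y| * Real.sqrt A) := by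
              rw [← e3]; exact mul_le_mul_of_nonneg_left e2 h5
          _ ≤ (2 * μ + 2) * M ^ (2 * μ + 2 - 1)
              * (Real.sqrt ε * (1 + |y|) * Real.sqrt A) := by
              gcongr
          _ = K * Real.sqrt ε * (1 + |y|) := by rw [hK]; ring
      calc |V y| * |‖ψ0 (ε * y)‖ ^ (2 * μ + 2) - ‖ψ0 0‖ ^ (2 * μ + 2)|
          ≤ |V y| * (K * Real.sqrt ε * (1 + |y|)) :=
            mul_le_mul_of_nonneg_left e5 (abs_nonneg _)
        _ = (K * Real.sqrt ε) * ((1 + |y|) * |V y|) := by ring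
    calc |∫ y, V y * (‖ψ0 (ε * y)‖ ^ (2 * μ + 2) - ‖ψ0 0‖ ^ (2 * μ + 2))|
        ≤ ∫ y, |V y * (‖ψ0 (ε * y)‖ ^ (2 * μ + 2) - ‖ψ0 0‖ ^ (2 * μ + 2))| := by
          simpa only [Real.norm_eq_abs] using norm_integral_le_integral_norm
            (fun y => V y * (‖ψ0 (ε * y)‖ ^ (2 * μ + 2) - ‖ψ0 0‖ ^ (2 * μ + 2)))
      _ ≤ ∫ y, (K * Real.sqrt ε) * ((1 + |y|) * |V y|) := by
          refine integral_mono_of_nonneg (Filter.Eventually.of_forall fun y => abs_nonneg _)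
            (hVw.const_mul _) (Filter.Eventually.of_forall fun y => hptw y)
      _ = (K * Real.sqrt ε) * W := by rw [integral_const_mul, hW]
      _ = K * W * Real.sqrt ε := by ring
  -- finish
  set c := (μ + 1)⁻¹ * K * W + 1 with hc
  have hμ1 : (0:ℝ) < (μ + 1)⁻¹ := inv_pos.2 (by linarith)
  have hcpos : 0 < c := by positivity
  have hbound : ∀ ε : ℝ, 0 < ε →
      |((∫ x, ‖dψ0 x‖ ^ 2) + (μ + 1)⁻¹ * ∫ x, ε⁻¹ * V (x / ε) * ‖ψ0 x‖ ^ (2 * μ + 2))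
        - ((∫ x, ‖dψ0 x‖ ^ 2) + (∫ x, V x) * (μ + 1)⁻¹ * ‖ψ0 0‖ ^ (2 * μ + 2))|
        ≤ c * Real.sqrt ε := by
    intro ε hε
    have heq : ((∫ x, ‖dψ0 x‖ ^ 2) + (μ + 1)⁻¹ * ∫ x, ε⁻¹ * V (x / ε) * ‖ψ0 x‖ ^ (2 * μ + 2))
        - ((∫ x, ‖dψ0 x‖ ^ 2) + (∫ x, V x) * (μ + 1)⁻¹ * ‖ψ0 0‖ ^ (2 * μ + 2))
        = (μ + 1)⁻¹ * ((∫ x, ε⁻¹ * V (x / ε) * ‖ψ0 x‖ ^ (2 * μ + 2))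
            - (∫ x, V x) * ‖ψ0 0‖ ^ (2 * μ + 2)) := by ring
    rw [heq, abs_mul, abs_of_pos hμ1]
    calc (μ + 1)⁻¹ * |(∫ x, ε⁻¹ * V (x / ε) * ‖ψ0 x‖ ^ (2 * μ + 2))
            - (∫ x, V x) * ‖ψ0 0‖ ^ (2 * μ + 2)|
        ≤ (μ + 1)⁻¹ * (K * W * Real.sqrt ε) :=
          mul_le_mul_of_nonneg_left (main ε hε) hμ1.le
      _ ≤ c * Real.sqrt ε := by
          rw [hc]
          have := Real.sqrt_nonneg ε
          nlinarith [mul_nonneg (mul_nonneg hμ1.le hK0) hW0]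
  refine ⟨⟨c, hcpos, hbound⟩, ?_⟩
  rw [tendsto_iff_dist_tendsto_zero]
  have hsq : Filter.Tendsto (fun ε : ℝ => c * Real.sqrt ε) (nhdsWithin 0 (Set.Ioi 0)) (nhds 0) := by
    have : Filter.Tendsto (fun ε : ℝ => c * Real.sqrt ε) (nhds 0) (nhds (c * Real.sqrt 0)) :=
      (continuous_const.mul Real.continuous_sqrt).tendsto 0
    simpa using this.mono_left nhdsWithin_le_nhds
  refine squeeze_zero' (Filter.Eventually.of_forall fun ε => dist_nonneg) ?_ hsq
  filter_upwards [self_mem_nhdsWithin] with ε (hε : ε ∈ Set.Ioi 0)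
  rw [Real.dist_eq]
  exact hbound ε hε
end
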